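/- (Explicit solution of the majorizing Volterra equation) Let k1 > 0, μ ≥ 0, σ ∈ [0,1), 0 < λ1 ≤ λ2 and E(0) > 0, and set a := (1/2)k1 E(0)(1+λ2)^μ λ1^{−σ}. Then the function E(x,t) := E(0)·exp( a x (e^t − 1) + t ) satisfies, for all x > 0 and all t ≥ 0, the integral equation E(x,t) = E(0) + ∫₀^t [ (1/2)k1(1+λ2)^μ λ1^{−σ} (E ∗ E)(x,s) + E(x,s) ] ds, where (E ∗ E)(x,s) := ∫₀^x E(y,s)E(x−y,s)dy is convolution in the first variable. -/

import Mathlib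

open MeasureTheory Set Real

noncomputable section

/-- **Explicit solution of the majorizing Volterra equation.**  With
`a = (1/2) k1 E0 (1+λ2)^μ λ1^{−σ}`, the function
`E(x,t) = E0 exp(a x (e^t − 1) + t)` satisfies the integral equation
`E(x,t) = E0 + ∫₀^t [ (1/2) k1 (1+λ2)^μ λ1^{−σ} (E ∗ E)(x,s) + E(x,s) ] ds`,
where `(E ∗ E)(x,s) = ∫₀^x E(y,s) E(x−y,s) dy`. -/
theorem volterra_majorant_explicit_solution
    (k1 μ σ lam1 lam2 E0 : ℝ) (hk1 : 0 < k1) (hμ : 0 ≤ μ)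
    (hσ : σ ∈ Ico (0:ℝ) 1) (hlam1 : 0 < lam1) (hlam : lam1 ≤ lam2) (hE0 : 0 < E0)
    (a : ℝ) (ha : a = (1 / 2) * k1 * E0 * (1 + lam2) ^ μ * lam1 ^ (-σ))
    (E : ℝ → ℝ → ℝ)
    (hE : ∀ x t : ℝ, E x t = E0 * Real.exp (a * x * (Real.exp t - 1) + t)) :
    ∀ x t : ℝ, 0 < x → 0 ≤ t →
      E x t = E0 + ∫ s in (0:ℝ)..t,
        ((1 / 2) * k1 * (1 + lam2) ^ μ * lam1 ^ (-σ) *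
          ∫ y in (0:ℝ)..x, E y s * E (x - y) s) + E x s := by
  intro x t hx ht
  -- convolution is integral of a constant
  have hconv : ∀ s : ℝ, (∫ y in (0:ℝ)..x, E y s * E (x - y) s)
      = x * (E0 ^ 2 * Real.exp (a * x * (Real.exp s - 1) + 2 * s)) := by
    intro s
    have hpt : ∀ y : ℝ, E y s * E (x - y) s
        = E0 ^ 2 * Real.exp (a * x * (Real.exp s - 1) + 2 * s) := by
      intro y
      rw [hE, hE, mul_mul_mul_comm, ← Real.exp_add,
        show (a * y * (Real.exp s - 1) + s) + (a * (x - y) * (Real.exp s - 1) + s)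
          = a * x * (Real.exp s - 1) + 2 * s by ring]
      ring
    simp only [hpt, intervalIntegral.integral_const, smul_eq_mul, sub_zero]
  -- derivative of the candidate solution
  have hd : ∀ s : ℝ, HasDerivAt (fun s => E0 * Real.exp (a * x * (Real.exp s - 1) + s))
      (a * x * E0 * Real.exp (a * x * (Real.exp s - 1) + 2 * s)
        + E0 * Real.exp (a * x * (Real.exp s - 1) + s)) s := by
    intro s
    have h1 : HasDerivAt (fun s => a * x * (Real.exp s - 1) + s)
        (a * x * Real.exp s + 1) s := by
      exact (((Real.hasDerivAt_exp s).sub_const 1).const_mul (a * x)).add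
        (hasDerivAt_id s)
    have h2 := h1.exp.const_mul E0
    refine h2.congr_deriv (Eq.symm ?_)
    rw [show a * x * (Real.exp s - 1) + 2 * s = (a * x * (Real.exp s - 1) + s) + s by ring,
      Real.exp_add]
    ring
  have hcont : Continuous (fun s => a * x * E0 * Real.exp (a * x * (Real.exp s - 1) + 2 * s)
      + E0 * Real.exp (a * x * (Real.exp s - 1) + s)) := by
    continuity
  have key := intervalIntegral.integral_eq_sub_of_hasDerivAt
    (f := fun s => E0 * Real.exp (a * x * (Real.exp s - 1) + s))
    (fun s _ => hd s) (hcont.intervalIntegrable 0 t)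
  have hint : ∀ s : ℝ, ((1 / 2) * k1 * (1 + lam2) ^ μ * lam1 ^ (-σ) *
        ∫ y in (0:ℝ)..x, E y s * E (x - y) s) + E x s
      = a * x * E0 * Real.exp (a * x * (Real.exp s - 1) + 2 * s)
        + E0 * Real.exp (a * x * (Real.exp s - 1) + s) := by
    intro s
    rw [hconv s, hE, ha]
    ring
  rw [hE x t]
  simp only [hint]
  rw [key]
  simp [Real.exp_zero]
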